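/- arXiv:1511.04556 — 4 statements merged into one kernel-verified Lean document; each statement's English description precedes it below -/
import Mathlib

section
/- For any two probability measures P0, P1 on the same measurable space and any event-based test, the minimum over tests φ taking values in {0,1} of the maximum error max(P0(φ=1), P1(φ=0)) is at least (1/4)·exp(−KL(P1‖P0)). -/
open MeasureTheory

/-- Cauchy–Schwarz-type bound via AM–GM: `∫_B √g ≤ √(c m)` when `∫_B g ≤ c` and `μ B ≤ m`. -/
lemma setIntegral_sqrt_le {α : Type*} [MeasurableSpace α] (μ : Measure α) [IsFiniteMeasure μ]
    {g : α → ℝ} (hg0 : ∀ x, 0 ≤ g x) (hgi : Integrable g μ)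
    (hsq : Integrable (fun x => Real.sqrt (g x)) μ)
    {B : Set α} {c m : ℝ} (hc : ∫ x in B, g x ∂μ ≤ c) (hm : (μ B).toReal ≤ m) :
    ∫ x in B, Real.sqrt (g x) ∂μ ≤ Real.sqrt (c * m) := by
  set I := ∫ x in B, Real.sqrt (g x) ∂μ with hI
  have hc0 : 0 ≤ c := le_trans (integral_nonneg fun x => hg0 x) hc
  have hm0 : 0 ≤ m := le_trans ENNReal.toReal_nonneg hm
  have hI0 : 0 ≤ I := integral_nonneg fun x => Real.sqrt_nonneg _
  have key : ∀ t : ℝ, 0 < t → 2 * I ≤ t * m + c / t := by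
    intro t ht
    have hpt : ∀ x, 2 * Real.sqrt (g x) ≤ t + g x / t := by
      intro x
      have h1 := Real.sq_sqrt (hg0 x)
      have h2 := Real.sqrt_nonneg (g x)
      have h3 := sq_nonneg (t - Real.sqrt (g x))
      have h4 : 2 * Real.sqrt (g x) * t ≤ t ^ 2 + g x := by nlinarith
      have h5 : t + g x / t = (t ^ 2 + g x) / t := by field_simp
      rw [h5, le_div_iff₀ ht]
      exact h4
    have hint1 : IntegrableOn (fun _ : α => t) B μ := (integrableOn_const_iff).mpr (Or.inr (measure_lt_top μ B))
    have hint2 : IntegrableOn (fun x => g x / t) B μ := (hgi.div_const t).integrableOn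
    calc 2 * I = ∫ x in B, 2 * Real.sqrt (g x) ∂μ := by rw [integral_const_mul]
      _ ≤ ∫ x in B, (t + g x / t) ∂μ := by
          refine integral_mono (hsq.integrableOn.const_mul 2) (hint1.add hint2) fun x => hpt x
      _ = t * (μ B).toReal + (∫ x in B, g x ∂μ) / t := by
          rw [integral_add hint1 hint2, setIntegral_const, integral_div, smul_eq_mul, mul_comm]; rfl
      _ ≤ t * m + c / t := by gcongr
  rcases eq_or_lt_of_le hI0 with h0 | hIpos
  · rw [← h0]; exact Real.sqrt_nonneg _
  · have hmpos : 0 < m := by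
      rcases eq_or_lt_of_le hm0 with h | h
      · exfalso
        have hB0 : μ B = 0 := by
          have := ENNReal.toReal_nonneg (a := μ B)
          have h1 : (μ B).toReal = 0 := le_antisymm (h ▸ hm) this
          exact (ENNReal.toReal_eq_zero_iff _).mp h1 |>.resolve_right (measure_ne_top μ B)
        have : I = 0 := by rw [hI, Measure.restrict_eq_zero.mpr hB0, integral_zero_measure]
        linarith
      · exact h
    have hk := key (I / m) (div_pos hIpos hmpos)
    rw [div_mul_cancel₀ _ hmpos.ne'] at hk
    have hI2 : I ^ 2 ≤ c * m := by
      have : I ≤ c / (I / m) := by linarith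
      rw [div_div_eq_mul_div, le_div_iff₀ hIpos] at this
      nlinarith
    calc I = Real.sqrt (I ^ 2) := (Real.sqrt_sq hI0).symm
      _ ≤ Real.sqrt (c * m) := Real.sqrt_le_sqrt hI2

/-- Kullback–Leibler divergence (real-valued), `KL(P‖Q) = ∫ log (dP/dQ) dP`. -/
noncomputable def klDiv {α : Type*} [MeasurableSpace α] (P Q : Measure α) : ℝ :=
  ∫ x, MeasureTheory.llr P Q x ∂P

/-- For any two probability measures `P0`, `P1` (with `P1 ≪ P0`) and any test given by a
measurable rejection region `A` (i.e. `φ = 1_A`), the maximum error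
`max (P0 A) (P1 Aᶜ)` is at least `(1/4) exp (- KL(P1‖P0))`. -/
theorem test_error_lower_bound_exp {α : Type*} [MeasurableSpace α]
    (P0 P1 : Measure α) [IsProbabilityMeasure P0] [IsProbabilityMeasure P1]
    (hac : P1 ≪ P0) (hint : Integrable (MeasureTheory.llr P1 P0) P1)
    (A : Set α) (hA : MeasurableSet A) :
    (1 / 4 : ℝ) * Real.exp (- klDiv P1 P0) ≤
      max (P0 A).toReal (P1 Aᶜ).toReal := by
  set g := fun x => (P0.rnDeriv P1 x).toReal with hg
  have hgmeas : Measurable g := (Measure.measurable_rnDeriv _ _).ennreal_toReal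
  have hg0 : ∀ x, 0 ≤ g x := fun x => ENNReal.toReal_nonneg
  have hgi : Integrable g P1 := Measure.integrable_toReal_rnDeriv
  have h1 : (fun x => Real.exp (- llr P1 P0 x)) =ᵐ[P1] g := exp_neg_llr hac
  have h2 : (fun x => Real.exp (- llr P1 P0 x / 2)) =ᵐ[P1] fun x => Real.sqrt (g x) := by
    filter_upwards [h1] with x hx
    rw [Real.exp_half, hx]
  have hsqi : Integrable (fun x => Real.sqrt (g x)) P1 := by
    refine Integrable.mono ((integrable_const (1 : ℝ)).add hgi)
      (Real.continuous_sqrt.measurable.comp hgmeas).aestronglyMeasurable ?_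
    refine Filter.Eventually.of_forall fun x => ?_
    simp only [Pi.add_apply]
    rw [Real.norm_eq_abs, abs_of_nonneg (Real.sqrt_nonneg _), Real.norm_eq_abs,
      abs_of_nonneg (add_nonneg zero_le_one (hg0 x))]
    nlinarith [Real.sq_sqrt (hg0 x), Real.sqrt_nonneg (g x), sq_nonneg (Real.sqrt (g x) - 1)]
  have hjen : Real.exp (- klDiv P1 P0 / 2) ≤ ∫ x, Real.sqrt (g x) ∂P1 := by
    have hfi : Integrable (fun x => - llr P1 P0 x / 2) P1 := (hint.neg.div_const 2)
    have hgint : Integrable (fun x => Real.exp (- llr P1 P0 x / 2)) P1 := hsqi.congr h2.symm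
    have hJ := convexOn_exp.map_integral_le (μ := P1) (f := fun x => - llr P1 P0 x / 2)
      Real.continuous_exp.continuousOn isClosed_univ
      (Filter.Eventually.of_forall fun x => Set.mem_univ _) hfi hgint
    have heq : ∫ x, - llr P1 P0 x / 2 ∂P1 = - klDiv P1 P0 / 2 := by
      rw [integral_div, integral_neg]; rfl
    calc Real.exp (- klDiv P1 P0 / 2) = Real.exp (∫ x, - llr P1 P0 x / 2 ∂P1) := by rw [heq]
      _ ≤ ∫ x, Real.exp (- llr P1 P0 x / 2) ∂P1 := hJ
      _ = ∫ x, Real.sqrt (g x) ∂P1 := integral_congr_ae h2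
  set a := (P0 A).toReal with ha
  set b := (P1 Aᶜ).toReal with hb
  have hca : ∫ x in A, g x ∂P1 ≤ a := Measure.setIntegral_toReal_rnDeriv_le (measure_ne_top P0 A)
  have hcb : ∫ x in Aᶜ, g x ∂P1 ≤ 1 := by
    refine le_trans (Measure.setIntegral_toReal_rnDeriv_le (measure_ne_top P0 Aᶜ)) ?_
    exact ENNReal.toReal_le_of_le_ofReal one_pos.le (by simpa using prob_le_one)
  have hma : (P1 A).toReal ≤ 1 :=
    ENNReal.toReal_le_of_le_ofReal one_pos.le (by simpa using prob_le_one)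
  have hb1 : ∫ x in A, Real.sqrt (g x) ∂P1 ≤ Real.sqrt (a * 1) :=
    setIntegral_sqrt_le P1 hg0 hgi hsqi hca hma
  have hb2 : ∫ x in Aᶜ, Real.sqrt (g x) ∂P1 ≤ Real.sqrt (1 * b) :=
    setIntegral_sqrt_le P1 hg0 hgi hsqi hcb le_rfl
  have hsplit : ∫ x, Real.sqrt (g x) ∂P1
      = (∫ x in A, Real.sqrt (g x) ∂P1) + ∫ x in Aᶜ, Real.sqrt (g x) ∂P1 :=
    (integral_add_compl hA hsqi).symm
  set M := max a b with hM
  have hM0 : 0 ≤ M := le_trans ENNReal.toReal_nonneg (le_max_left a b)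
  have haM : a ≤ M := le_max_left a b
  have hbM : b ≤ M := le_max_right a b
  have hfinal : Real.exp (- klDiv P1 P0 / 2) ≤ 2 * Real.sqrt M := by
    calc Real.exp (- klDiv P1 P0 / 2) ≤ ∫ x, Real.sqrt (g x) ∂P1 := hjen
      _ = (∫ x in A, Real.sqrt (g x) ∂P1) + ∫ x in Aᶜ, Real.sqrt (g x) ∂P1 := hsplit
      _ ≤ Real.sqrt (a * 1) + Real.sqrt (1 * b) := add_le_add hb1 hb2
      _ = Real.sqrt a + Real.sqrt b := by rw [mul_one, one_mul]
      _ ≤ Real.sqrt M + Real.sqrt M := add_le_add (Real.sqrt_le_sqrt haM) (Real.sqrt_le_sqrt hbM)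
      _ = 2 * Real.sqrt M := by ring
  have hexp : Real.exp (- klDiv P1 P0 / 2) ^ 2 = Real.exp (- klDiv P1 P0) := by
    rw [sq, ← Real.exp_add]; ring_nf
  nlinarith [Real.exp_pos (- klDiv P1 P0 / 2), Real.sq_sqrt hM0, Real.sqrt_nonneg M, hexp]
end

section
/- The soft thresholding function δ^s(d,λ) = sign(d)·max(|d|−λ, 0) satisfies, for all β, ξ ∈ ℝ and λ > 0: |δ^s(β+ξ, λ) − β| ≤ 3·(min(|β|, λ) + |ξ|·1_{|ξ| > λ/2}). -/
/-- Soft thresholding: `δˢ(d, λ) = sign d · (|d| - λ)₊`. -/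
noncomputable def softThresh (d lam : ℝ) : ℝ := Real.sign d * max (|d| - lam) 0

lemma abs_softThresh_le (d lam : ℝ) : |softThresh d lam| ≤ max (|d| - lam) 0 := by
  unfold softThresh
  rw [abs_mul]
  have h1 : |Real.sign d| ≤ 1 := by
    rcases lt_trichotomy d 0 with h | h | h
    · simp [Real.sign_of_neg h]
    · simp [h]
    · simp [Real.sign_of_pos h]
  have h2 : |max (|d| - lam) 0| = max (|d| - lam) 0 := abs_of_nonneg (le_max_right _ _)
  rw [h2]
  nlinarith [le_max_right (|d| - lam) 0, abs_nonneg (Real.sign d)]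

lemma softThresh_sub_le (d lam : ℝ) (hlam : 0 ≤ lam) : |softThresh d lam - d| ≤ lam := by
  unfold softThresh
  rcases lt_trichotomy d 0 with h | h | h
  · rw [Real.sign_of_neg h, abs_of_neg h]
    rcases le_total (-d - lam) 0 with hm | hm
    · rw [max_eq_right hm]; rw [abs_le]; constructor <;> nlinarith
    · rw [max_eq_left hm]; rw [abs_le]; constructor <;> nlinarith
  · simp [h, hlam]
  · rw [Real.sign_of_pos h, abs_of_pos h]
    rcases le_total (d - lam) 0 with hm | hm
    · rw [max_eq_right hm]; rw [abs_le]; constructor <;> nlinarith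
    · rw [max_eq_left hm]; rw [abs_le]; constructor <;> nlinarith

/-- The soft thresholding function satisfies the shrinkage-stability bound
`|δˢ(β+ξ, λ) - β| ≤ 3 (min(|β|, λ) + |ξ| 1_{|ξ| > λ/2})`. -/
theorem soft_thresh_stability (β ξ lam : ℝ) (hlam : 0 < lam) :
    |softThresh (β + ξ) lam - β| ≤
      3 * (min |β| lam + |ξ| * (if lam / 2 < |ξ| then 1 else 0)) := by
  have hmove := softThresh_sub_le (β + ξ) lam hlam.le
  have htri : |softThresh (β + ξ) lam - β| ≤ lam + |ξ| := by
    calc |softThresh (β + ξ) lam - β|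
        ≤ |softThresh (β + ξ) lam - (β + ξ)| + |ξ| := by
          have := abs_sub_abs_le_abs_sub (softThresh (β + ξ) lam - β) ξ
          calc |softThresh (β + ξ) lam - β|
              = |(softThresh (β + ξ) lam - (β + ξ)) + ξ| := by ring_nf
            _ ≤ |softThresh (β + ξ) lam - (β + ξ)| + |ξ| := abs_add_le _ _
      _ ≤ lam + |ξ| := by linarith
  split_ifs with h
  · -- |ξ| > lam/2 : bound by 3|ξ|
    have hmin : (0:ℝ) ≤ min |β| lam := le_min (abs_nonneg _) hlam.le
    nlinarith
  · push_neg at h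
    rcases le_total lam |β| with hb | hb
    · rw [min_eq_right hb]
      nlinarith
    · rw [min_eq_left hb]
      have hsz := abs_softThresh_le (β + ξ) lam
      have habs : |β + ξ| ≤ |β| + |ξ| := abs_add_le _ _
      have hmax : max (|β + ξ| - lam) 0 ≤ |β| := by
        apply max_le _ (abs_nonneg _)
        linarith
      calc |softThresh (β + ξ) lam - β|
          ≤ |softThresh (β + ξ) lam| + |β| := by
            simpa using abs_sub (softThresh (β + ξ) lam) β
        _ ≤ 2 * |β| := by linarith
        _ ≤ 3 * (|β| + |ξ| * 0) := by nlinarith [abs_nonneg β]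
end

section
/- The hard thresholding function δ^h(d,λ) = d·1_{|d|>λ} satisfies, for all β, ξ ∈ ℝ and λ > 0: |δ^h(β+ξ, λ) − β| ≤ C·(min(|β|, λ) + |ξ|·1_{|ξ| > λ/2}) for some universal constant C (for instance C = 3 works). -/
/-- Hard thresholding: `δʰ(d, λ) = d · 1_{|d| > λ}`. -/
noncomputable def hardThresh (d lam : ℝ) : ℝ := if lam < |d| then d else 0

/-- The hard thresholding function satisfies the shrinkage-stability bound
`|δʰ(β+ξ, λ) - β| ≤ C (min(|β|, λ) + |ξ| 1_{|ξ| > λ/2})` for some universal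
constant `C` (for instance `C = 3` works). -/
theorem hard_thresh_stability :
    ∃ C : ℝ, 0 < C ∧ C = 3 ∧ ∀ β ξ lam : ℝ, 0 < lam →
      |hardThresh (β + ξ) lam - β| ≤
        C * (min |β| lam + |ξ| * (if lam / 2 < |ξ| then 1 else 0)) := by
  refine ⟨3, by norm_num, rfl, fun β ξ lam hl => ?_⟩
  have h1 : |β + ξ| ≤ |β| + |ξ| := abs_add_le β ξ
  have h2 : |β| ≤ |β + ξ| + |ξ| := by
    calc |β| = |(β + ξ) + (-ξ)| := by ring_nf
    _ ≤ |β + ξ| + |(-ξ)| := abs_add_le _ _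
    _ = |β + ξ| + |ξ| := by rw [abs_neg]
  have hbn := abs_nonneg β
  have hxn := abs_nonneg ξ
  unfold hardThresh
  rcases min_cases |β| lam with ⟨hm, _⟩ | ⟨hm, _⟩ <;> rw [hm] <;>
    split_ifs with hbig hnoise hnoise <;>
    · simp only [add_sub_cancel_left, abs_sub_comm, sub_zero, mul_one, mul_zero] <;>
      (try push_neg at *) <;> linarith
end

section
/- If a shrinkage function δ satisfies |δ^s(d,λ)| ≤ |δ(d,λ)| ≤ |δ^h(d,λ)| with sign(δ(d,λ)) = sign(d), and both δ^s and δ^h satisfy the stability bound |δ(β+ξ,λ) − β| ≤ C(min(|β|,λ) + |ξ|·1_{|ξ|>λ/2}), then δ also satisfies this bound with the same constant C. In particular SCAD thresholding satisfies the stability condition. -/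
/-- If a shrinkage function `δ` is sandwiched in absolute value between soft and hard
thresholding with matching sign, and both soft and hard thresholding satisfy the
stability bound with constant `C`, then `δ` satisfies the same bound. -/
theorem sandwich_thresh_stability (C : ℝ) (δ : ℝ → ℝ → ℝ)
    (hsand : ∀ d lam : ℝ, 0 < lam →
      |softThresh d lam| ≤ |δ d lam| ∧ |δ d lam| ≤ |hardThresh d lam| ∧ 0 ≤ d * δ d lam)
    (hsoft : ∀ β ξ lam : ℝ, 0 < lam →
      |softThresh (β + ξ) lam - β| ≤
        C * (min |β| lam + |ξ| * (if lam / 2 < |ξ| then 1 else 0)))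
    (hhard : ∀ β ξ lam : ℝ, 0 < lam →
      |hardThresh (β + ξ) lam - β| ≤
        C * (min |β| lam + |ξ| * (if lam / 2 < |ξ| then 1 else 0))) :
    ∀ β ξ lam : ℝ, 0 < lam →
      |δ (β + ξ) lam - β| ≤
        C * (min |β| lam + |ξ| * (if lam / 2 < |ξ| then 1 else 0)) := by
  intro β ξ lam hlam
  obtain ⟨h1, h2, h3⟩ := hsand (β + ξ) lam hlam
  have hs := hsoft β ξ lam hlam
  have hh := hhard β ξ lam hlam
  set d := β + ξ with hd
  set s := softThresh d lam with hsdef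
  set h := hardThresh d lam with hhdef
  set x := δ d lam with hxdef
  -- helper: if a ≤ x ≤ b then |x - β| ≤ max |a - β| |b - β|
  have key : ∀ a b : ℝ, a ≤ x → x ≤ b → |x - β| ≤ max |a - β| |b - β| := by
    intro a b hax hxb
    rcases le_total x β with hc | hc
    · refine le_trans ?_ (le_max_left _ _)
      rw [abs_sub_comm x β, abs_sub_comm a β,
        abs_of_nonneg (by linarith), abs_of_nonneg (by linarith)]
      linarith
    · refine le_trans ?_ (le_max_right _ _)
      rw [abs_of_nonneg (by linarith), abs_of_nonneg (by linarith)]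
      linarith
  have hmax : max |s - β| |h - β| ≤
      C * (min |β| lam + |ξ| * (if lam / 2 < |ξ| then 1 else 0)) := max_le hs hh
  rcases le_or_gt 0 d with hd0 | hd0
  · -- d ≥ 0 : s ≤ x ≤ h
    have hx0 : 0 ≤ x := by
      rcases eq_or_lt_of_le hd0 with he | hpos
      · have : |h| = 0 := by
          rw [hhdef, hardThresh, ← he]
          simp [abs_of_nonneg, not_lt.mpr hlam.le]
        have : |x| ≤ 0 := this ▸ h2
        have : x = 0 := abs_nonpos_iff.mp this
        simp [this]
      · nlinarith [h3]
    have hs0 : 0 ≤ s := by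
      rw [hsdef, softThresh]
      have : 0 ≤ Real.sign d := by
        rcases eq_or_lt_of_le hd0 with he | hpos
        · simp [← he]
        · simp [Real.sign_of_pos hpos]
      positivity
    have hh0 : 0 ≤ h := by
      rw [hhdef, hardThresh]; split <;> simp [hd0]
    have hsx : s ≤ x := by
      rw [abs_of_nonneg hs0] at h1; rw [abs_of_nonneg hx0] at h1; exact h1
    have hxh : x ≤ h := by
      rw [abs_of_nonneg hx0] at h2; rw [abs_of_nonneg hh0] at h2; exact h2
    exact le_trans (key s h hsx hxh) hmax
  · -- d < 0 : h ≤ x ≤ s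
    have hx0 : x ≤ 0 := by nlinarith [h3]
    have hs0 : s ≤ 0 := by
      rw [hsdef, softThresh]
      have h1 : Real.sign d ≤ 0 := by simp [Real.sign_of_neg hd0]
      have h2 : (0:ℝ) ≤ max (|d| - lam) 0 := le_max_right _ _
      exact mul_nonpos_of_nonpos_of_nonneg h1 h2
    have hh0 : h ≤ 0 := by
      rw [hhdef, hardThresh]; split <;> simp [hd0.le]
    have hxs : x ≤ s := by
      rw [abs_of_nonpos hs0] at h1; rw [abs_of_nonpos hx0] at h1; linarith
    have hhx : h ≤ x := by
      rw [abs_of_nonpos hx0] at h2; rw [abs_of_nonpos hh0] at h2; linarith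
    exact le_trans (key h s hhx hxs) (by rw [max_comm]; exact hmax)
end
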